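/- Let G be a strongly connected digraph on n vertices with arc connectivity κ'(G) = k ≥ 1, and suppose G contains a vertex of indegree k. Then for 0 ≤ α < 1, μ_α(G) ≥ μ_α(K(n,k,1)), with equality if and only if G ≅ K(n,k,1). -/

import Mathlib

open Matrix BigOperators

/-- Spectral radius of a real square matrix: the largest modulus of its complex eigenvalues. -/
noncomputable def specRad {n : ℕ} (M : Matrix (Fin n) (Fin n) ℝ) : ℝ :=
  sSup {r : ℝ | ∃ μ ∈ spectrum ℂ (M.map (fun x => (x : ℂ))), r = ‖μ‖}

/-- A matrix is irreducible iff its associated digraph is strongly connected. -/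
def Irred {n : ℕ} (M : Matrix (Fin n) (Fin n) ℝ) : Prop :=
  ∀ i j : Fin n, Relation.ReflTransGen (fun a b => M a b ≠ 0) i j

/-- A directed walk of length `k` from `i` to `j` in a digraph. -/
def DWalk {n : ℕ} (G : Digraph (Fin n)) (i j : Fin n) (k : ℕ) : Prop :=
  ∃ f : ℕ → Fin n, f 0 = i ∧ f k = j ∧ ∀ l < k, G.Adj (f l) (f (l + 1))

/-- A digraph is strongly connected iff every vertex can reach every vertex. -/
def SConn {n : ℕ} (G : Digraph (Fin n)) : Prop :=
  ∀ i j : Fin n, ∃ k : ℕ, DWalk G i j k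

/-- A simple digraph has no loops. -/
def Loopless {n : ℕ} (G : Digraph (Fin n)) : Prop := ∀ i : Fin n, ¬ G.Adj i i

/-- Directed distance from `i` to `j`. -/
noncomputable def ddist {n : ℕ} (G : Digraph (Fin n)) (i j : Fin n) : ℕ :=
  sInf {k : ℕ | DWalk G i j k}

/-- Transmission of vertex `i`: sum of distances from `i` to all vertices. -/
noncomputable def transm {n : ℕ} (G : Digraph (Fin n)) (i : Fin n) : ℝ :=
  ∑ j : Fin n, (ddist G i j : ℝ)

/-- The generalized distance matrix `D_α(G) = α·Diag(Tr) + (1-α)·D(G)`. -/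
noncomputable def Dalpha {n : ℕ} (α : ℝ) (G : Digraph (Fin n)) : Matrix (Fin n) (Fin n) ℝ :=
  α • Matrix.diagonal (transm G) + (1 - α) • (Matrix.of fun i j => (ddist G i j : ℝ))

/-- The `D_α` spectral radius of a digraph. -/
noncomputable def mualpha {n : ℕ} (α : ℝ) (G : Digraph (Fin n)) : ℝ :=
  specRad (Dalpha α G)

/-- Isomorphism of digraphs on `Fin n`. -/
def IsoD {n : ℕ} (G H : Digraph (Fin n)) : Prop :=
  ∃ e : Fin n ≃ Fin n, ∀ i j : Fin n, G.Adj i j ↔ H.Adj (e i) (e j)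

/-- The digraph `K(n,k,m)`: vertices `0..k-1` form `K↔ₖ`, `k..k+m-1` form `K↔ₘ`,
`k+m..n-1` form `K↔_{n-k-m}`; all arcs present except those from `K↔_{n-k-m}` to `K↔ₘ`. -/
def KD (n k m : ℕ) : Digraph (Fin n) :=
  ⟨fun i j => i ≠ j ∧ ¬(k + m ≤ (i : ℕ) ∧ k ≤ (j : ℕ) ∧ (j : ℕ) < k + m)⟩

/-- A directed walk staying inside a vertex set `A`. -/
def DWalkIn {n : ℕ} (G : Digraph (Fin n)) (A : Set (Fin n)) (i j : Fin n) (k : ℕ) : Prop :=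
  ∃ f : ℕ → Fin n, f 0 = i ∧ f k = j ∧ (∀ l ≤ k, f l ∈ A) ∧ ∀ l < k, G.Adj (f l) (f (l + 1))

/-- The induced subdigraph on `A` is strongly connected. -/
def SCOn {n : ℕ} (G : Digraph (Fin n)) (A : Set (Fin n)) : Prop :=
  ∀ i ∈ A, ∀ j ∈ A, ∃ k : ℕ, DWalkIn G A i j k


open Filter Topology
open scoped ENNReal NNReal

namespace SRAux

attribute [local instance] Matrix.linftyOpNormedRing Matrix.linftyOpNormedAlgebra
  Matrix.linftyOpNormedAddCommGroup Matrix.linftyOpNormedSpace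

variable {n : ℕ}

instance : CompleteSpace (Matrix (Fin n) (Fin n) ℂ) :=
  inferInstance

/-- complexification -/
noncomputable abbrev cmap (M : Matrix (Fin n) (Fin n) ℝ) : Matrix (Fin n) (Fin n) ℂ :=
  M.map (fun x => (x : ℂ))

lemma cmap_pow (M : Matrix (Fin n) (Fin n) ℝ) (m : ℕ) : cmap (M ^ m) = (cmap M) ^ m :=
  map_pow ((algebraMap ℝ ℂ).mapMatrix) M m

lemma nnnorm_cmap_mono {X Y : Matrix (Fin n) (Fin n) ℝ} (h : ∀ i j, |X i j| ≤ Y i j) :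
    ‖cmap X‖₊ ≤ ‖cmap Y‖₊ := by
  rw [Matrix.linfty_opNNNorm_def, Matrix.linfty_opNNNorm_def]
  refine Finset.sup_mono_fun fun i _ => Finset.sum_le_sum fun j _ => ?_
  have h1 : ‖X i j‖ ≤ ‖Y i j‖ := by
    rw [Real.norm_eq_abs, Real.norm_eq_abs]
    exact (h i j).trans (le_abs_self _)
  simpa [cmap, Matrix.map_apply, ← NNReal.coe_le_coe] using h1

lemma entry_le_nnnorm (A : Matrix (Fin n) (Fin n) ℂ) (i j : Fin n) : ‖A i j‖₊ ≤ ‖A‖₊ := by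
  rw [Matrix.linfty_opNNNorm_def]
  exact le_trans (Finset.single_le_sum (f := fun j => ‖A i j‖₊) (fun j _ => zero_le)
    (Finset.mem_univ j)) (Finset.le_sup (f := fun i => ∑ j, ‖A i j‖₊) (Finset.mem_univ i))

lemma gelfand (M : Matrix (Fin n) (Fin n) ℝ) :
    Tendsto (fun m : ℕ => (‖cmap (M ^ m)‖₊ : ℝ≥0∞) ^ (1/m : ℝ)) atTop
      (𝓝 (spectralRadius ℂ (cmap M))) := by
  have := spectrum.pow_nnnorm_pow_one_div_tendsto_nhds_spectralRadius (cmap M)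
  simpa [cmap_pow] using this

lemma specRad_eq [NeZero n] (M : Matrix (Fin n) (Fin n) ℝ) :
    specRad M = (spectralRadius ℂ (cmap M)).toReal ∧ spectralRadius ℂ (cmap M) ≠ ⊤ := by
  have htop : spectralRadius ℂ (cmap M) ≠ ⊤ :=
    ne_top_of_le_ne_top ENNReal.coe_ne_top (spectrum.spectralRadius_le_nnnorm _)
  refine ⟨?_, htop⟩
  obtain ⟨μ0, hμ0⟩ : (spectrum ℂ (cmap M)).Nonempty := spectrum.nonempty _
  set S := {r : ℝ | ∃ μ ∈ spectrum ℂ (cmap M), r = ‖μ‖} with hS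
  have hSne : S.Nonempty := ⟨_, μ0, hμ0, rfl⟩
  have hbdd : BddAbove S := by
    refine ⟨‖cmap M‖, fun r hr => ?_⟩
    obtain ⟨μ, hμ, rfl⟩ := hr
    exact spectrum.norm_le_norm_of_mem hμ
  have h0S : 0 ≤ sSup S := le_trans (norm_nonneg μ0) (le_csSup hbdd ⟨μ0, hμ0, rfl⟩)
  show sSup S = _
  apply le_antisymm
  · refine csSup_le hSne fun r hr => ?_
    obtain ⟨μ, hμ, rfl⟩ := hr
    have h1 : (‖μ‖₊ : ℝ≥0∞) ≤ spectralRadius ℂ (cmap M) :=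
      le_iSup₂ (f := fun (k : ℂ) (_ : k ∈ spectrum ℂ (cmap M)) => (‖k‖₊ : ℝ≥0∞)) μ hμ
    have := ENNReal.toReal_mono htop h1
    simpa using this
  · have h2 : spectralRadius ℂ (cmap M) ≤ ENNReal.ofReal (sSup S) := by
      refine iSup₂_le fun μ hμ => ?_
      have hmem : ‖μ‖ ≤ sSup S := le_csSup hbdd ⟨μ, hμ, rfl⟩
      calc (‖μ‖₊ : ℝ≥0∞) = ENNReal.ofReal ‖μ‖ := (ofReal_norm μ).symm
        _ ≤ _ := ENNReal.ofReal_le_ofReal (by simpa using hmem)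
    calc (spectralRadius ℂ (cmap M)).toReal ≤ (ENNReal.ofReal (sSup S)).toReal :=
          ENNReal.toReal_mono ENNReal.ofReal_ne_top h2
      _ = sSup S := ENNReal.toReal_ofReal h0S

lemma mul_nonneg' {X Y : Matrix (Fin n) (Fin n) ℝ} (hX : ∀ i j, 0 ≤ X i j)
    (hY : ∀ i j, 0 ≤ Y i j) : ∀ i j, 0 ≤ (X * Y) i j := fun i j => by
  rw [Matrix.mul_apply]
  exact Finset.sum_nonneg fun l _ => mul_nonneg (hX i l) (hY l j)

lemma mul_le_mul' {X X' Y Y' : Matrix (Fin n) (Fin n) ℝ} (hX0 : ∀ i j, 0 ≤ X' i j)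
    (hY0 : ∀ i j, 0 ≤ Y' i j) (hX : ∀ i j, X' i j ≤ X i j) (hY : ∀ i j, Y' i j ≤ Y i j) :
    ∀ i j, (X' * Y') i j ≤ (X * Y) i j := fun i j => by
  rw [Matrix.mul_apply, Matrix.mul_apply]
  exact Finset.sum_le_sum fun l _ => mul_le_mul (hX i l) (hY l j) (hY0 l j)
    (le_trans (hX0 i l) (hX i l))

lemma pow_nonneg' {X : Matrix (Fin n) (Fin n) ℝ} (hX : ∀ i j, 0 ≤ X i j) (m : ℕ) :
    ∀ i j, 0 ≤ (X ^ m) i j := by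
  induction m with
  | zero => intro i j; rw [pow_zero]; by_cases h : i = j <;> simp [Matrix.one_apply, h]
  | succ m ih => rw [pow_succ]; exact mul_nonneg' ih hX

lemma pow_le_pow' {X X' : Matrix (Fin n) (Fin n) ℝ} (hX0 : ∀ i j, 0 ≤ X' i j)
    (hX : ∀ i j, X' i j ≤ X i j) (m : ℕ) : ∀ i j, (X' ^ m) i j ≤ (X ^ m) i j := by
  induction m with
  | zero => intro i j; rw [pow_zero, pow_zero]
  | succ m ih => rw [pow_succ, pow_succ]; exact mul_le_mul' (pow_nonneg' hX0 m) hX0 ih hX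

lemma specRad_mono [NeZero n] {A B : Matrix (Fin n) (Fin n) ℝ}
    (hB0 : ∀ i j, 0 ≤ B i j) (hBA : ∀ i j, B i j ≤ A i j) : specRad B ≤ specRad A := by
  obtain ⟨eB, _⟩ := specRad_eq B
  obtain ⟨eA, tA⟩ := specRad_eq A
  rw [eB, eA]
  refine ENNReal.toReal_mono tA ?_
  refine le_of_tendsto_of_tendsto (gelfand B) (gelfand A) (Eventually.of_forall fun m => ?_)
  refine ENNReal.rpow_le_rpow ?_ (by positivity)
  refine ENNReal.coe_le_coe.2 (nnnorm_cmap_mono fun i j => ?_)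
  rw [abs_of_nonneg (pow_nonneg' hB0 m i j)]
  exact pow_le_pow' hB0 hBA m i j

lemma exists_third (hn3 : 3 ≤ n) (i j : Fin n) : ∃ l : Fin n, l ≠ i ∧ l ≠ j := by
  by_contra h
  push_neg at h
  have hsub : (Finset.univ : Finset (Fin n)) ⊆ {i, j} := by
    intro l _
    rcases eq_or_ne l i with h1 | h1
    · simp [h1]
    · simp [h l h1]
  have := Finset.card_le_card hsub
  have h2 : ({i, j} : Finset (Fin n)).card ≤ 2 :=
    le_trans (Finset.card_insert_le _ _) (by simp)
  simp only [Finset.card_univ, Fintype.card_fin] at this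
  omega

lemma mul_pos' {X Y : Matrix (Fin n) (Fin n) ℝ} [NeZero n] (hX : ∀ i j, 0 < X i j)
    (hY : ∀ i j, 0 < Y i j) : ∀ i j, 0 < (X * Y) i j := fun i j => by
  rw [Matrix.mul_apply]
  exact Finset.sum_pos (fun l _ => mul_pos (hX i l) (hY l j)) Finset.univ_nonempty

lemma specRad_lt [NeZero n] (hn3 : 3 ≤ n) {A B : Matrix (Fin n) (Fin n) ℝ}
    (hB0 : ∀ i j, 0 ≤ B i j) (hBpos : ∀ i j, i ≠ j → 0 < B i j)
    (hBA : ∀ i j, B i j ≤ A i j)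
    (hne : ∃ a b, a ≠ b ∧ B a b < A a b) : specRad B < specRad A := by
  have hA0 : ∀ i j, 0 ≤ A i j := fun i j => (hB0 i j).trans (hBA i j)
  set P := B * B with hPdef
  set Q := A * A with hQdef
  have hP0 : ∀ i j, 0 ≤ P i j := mul_nonneg' hB0 hB0
  have hQ0 : ∀ i j, 0 ≤ Q i j := mul_nonneg' hA0 hA0
  have hPQ : ∀ i j, P i j ≤ Q i j := mul_le_mul' hB0 hB0 hBA hBA
  have hPpos : ∀ i j, 0 < P i j := by
    intro i j
    obtain ⟨l, hli, hlj⟩ := exists_third hn3 i j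
    rw [hPdef, Matrix.mul_apply]
    exact Finset.sum_pos' (fun l _ => mul_nonneg (hB0 _ _) (hB0 _ _))
      ⟨l, Finset.mem_univ l, mul_pos (hBpos i l (Ne.symm hli)) (hBpos l j hlj)⟩
  have hPP0 : ∀ i j, 0 ≤ (P * P) i j := mul_nonneg' hP0 hP0
  have hQQ0 : ∀ i j, 0 ≤ (Q * Q) i j := mul_nonneg' hQ0 hQ0
  have hPPQQ : ∀ i j, (P * P) i j ≤ (Q * Q) i j := mul_le_mul' hP0 hP0 hPQ hPQ
  have hPPP0 : ∀ i j, 0 < (P * P * P) i j := mul_pos' (mul_pos' hPpos hPpos) hPpos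
  have hPPPQ : ∀ i j, (P * P * P) i j ≤ (Q * Q * Q) i j :=
    mul_le_mul' hPP0 hP0 hPPQQ hPQ
  obtain ⟨c, hc1, hc⟩ : ∃ c : ℝ, 1 < c ∧ ∀ i j, c * ((P * P * P) i j) ≤ (Q * Q * Q) i j := by
    obtain ⟨a, b, hab, hlt⟩ := hne
    have haa : P a a < Q a a := by
      rw [hPdef, hQdef, Matrix.mul_apply, Matrix.mul_apply]
      refine Finset.sum_lt_sum
        (fun l _ => mul_le_mul (hBA a l) (hBA l a) (hB0 l a) (hA0 a l))
        ⟨b, Finset.mem_univ b, ?_⟩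
      calc B a b * B b a < A a b * B b a :=
            mul_lt_mul_of_pos_right hlt (hBpos b a hab.symm)
        _ ≤ A a b * A b a :=
            mul_le_mul_of_nonneg_left (hBA b a) ((hB0 a b).trans (hBA a b))
    obtain ⟨δ, hδ, hδeq⟩ : ∃ δ : ℝ, 0 < δ ∧ P a a + δ = Q a a :=
      ⟨Q a a - P a a, by linarith, by ring⟩
    obtain ⟨pm, hpm0, hpm⟩ : ∃ pm : ℝ, 0 < pm ∧ ∀ i j, pm ≤ P i j := by
      obtain ⟨p, -, hp⟩ := Finset.exists_min_image (Finset.univ : Finset (Fin n × Fin n))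
        (fun q => P q.1 q.2) ⟨(a, a), Finset.mem_univ _⟩
      exact ⟨P p.1 p.2, hPpos p.1 p.2, fun i j => hp (i, j) (Finset.mem_univ _)⟩
    have s1 : ∀ i, (P * P) i a + pm * δ ≤ (Q * Q) i a := by
      intro i
      rw [Matrix.mul_apply, Matrix.mul_apply,
        ← Finset.add_sum_erase _ (fun l => P i l * P l a) (Finset.mem_univ a),
        ← Finset.add_sum_erase _ (fun l => Q i l * Q l a) (Finset.mem_univ a)]
      have h1 : P i a * P a a + pm * δ ≤ Q i a * Q a a := by
        calc P i a * P a a + pm * δ ≤ P i a * P a a + P i a * δ := by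
              have := mul_le_mul_of_nonneg_right (hpm i a) hδ.le
              linarith
          _ = P i a * (P a a + δ) := by ring
          _ = P i a * Q a a := by rw [hδeq]
          _ ≤ Q i a * Q a a := mul_le_mul_of_nonneg_right (hPQ i a) (hQ0 a a)
      have h5 : ∑ l ∈ Finset.univ.erase a, P i l * P l a ≤
          ∑ l ∈ Finset.univ.erase a, Q i l * Q l a :=
        Finset.sum_le_sum fun l _ => mul_le_mul (hPQ i l) (hPQ l a) (hP0 l a)
          ((hP0 i l).trans (hPQ i l))
      linarith
    have s2 : ∀ i j, (P * P * P) i j + pm * δ * pm ≤ (Q * Q * Q) i j := by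
      intro i j
      rw [Matrix.mul_apply (M := P * P), Matrix.mul_apply (M := Q * Q),
        ← Finset.add_sum_erase _ (fun l => (P * P) i l * P l j) (Finset.mem_univ a),
        ← Finset.add_sum_erase _ (fun l => (Q * Q) i l * Q l j) (Finset.mem_univ a)]
      have h1 : (P * P) i a * P a j + pm * δ * pm ≤ (Q * Q) i a * Q a j := by
        calc (P * P) i a * P a j + pm * δ * pm
            ≤ (P * P) i a * P a j + pm * δ * P a j := by
              have := mul_le_mul_of_nonneg_left (hpm a j) (mul_nonneg hpm0.le hδ.le)
              linarith
          _ = ((P * P) i a + pm * δ) * P a j := by ring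
          _ ≤ (Q * Q) i a * P a j := mul_le_mul_of_nonneg_right (s1 i) (hP0 a j)
          _ ≤ (Q * Q) i a * Q a j := mul_le_mul_of_nonneg_left (hPQ a j) (hQQ0 i a)
      have h5 : ∑ l ∈ Finset.univ.erase a, (P * P) i l * P l j ≤
          ∑ l ∈ Finset.univ.erase a, (Q * Q) i l * Q l j :=
        Finset.sum_le_sum fun l _ => mul_le_mul (hPPQQ i l) (hPQ l j) (hP0 l j)
          ((hPP0 i l).trans (hPPQQ i l))
      linarith
    obtain ⟨M0, hM0pos, hM0⟩ : ∃ M0 : ℝ, 0 < M0 ∧ ∀ i j, (P * P * P) i j ≤ M0 := by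
      obtain ⟨q, -, hq⟩ := Finset.exists_max_image (Finset.univ : Finset (Fin n × Fin n))
        (fun r => (P * P * P) r.1 r.2) ⟨(a, a), Finset.mem_univ _⟩
      exact ⟨(P * P * P) q.1 q.2, hPPP0 _ _, fun i j => hq (i, j) (Finset.mem_univ _)⟩
    refine ⟨1 + pm * δ * pm / M0, by nlinarith [mul_pos (mul_pos hpm0 hδ) hpm0, hM0pos, (div_pos (mul_pos (mul_pos hpm0 hδ) hpm0) hM0pos)], fun i j => ?_⟩
    have h1 := s2 i j
    have h2 := hM0 i j
    have h3 := (hPPP0 i j).le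
    have h4 : pm * δ * pm / M0 * ((P * P * P) i j) ≤ pm * δ * pm := by
      rw [div_mul_eq_mul_div, div_le_iff₀ hM0pos]
      exact mul_le_mul_of_nonneg_left h2 (by positivity)
    nlinarith
  have hB6 : B ^ 6 = P * P * P := by
    simp only [hPdef, pow_succ, pow_zero, one_mul, mul_assoc]
  have hA6 : A ^ 6 = Q * Q * Q := by
    simp only [hQdef, pow_succ, pow_zero, one_mul, mul_assoc]
  have hB60 : ∀ i j, 0 ≤ (B ^ 6) i j := pow_nonneg' hB0 6
  have hc0 : (0:ℝ) ≤ c := by linarith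
  have key : ∀ m, ∀ i j, c ^ m * ((B ^ 6) ^ m) i j ≤ ((A ^ 6) ^ m) i j := by
    intro m
    induction m with
    | zero => intro i j; simp
    | succ m ih =>
      intro i j
      rw [pow_succ (B ^ 6) m, pow_succ (A ^ 6) m, pow_succ c m,
        Matrix.mul_apply, Matrix.mul_apply, Finset.mul_sum]
      refine Finset.sum_le_sum fun l _ => ?_
      have h1 := ih i l
      have h2 : c * (B ^ 6) l j ≤ (A ^ 6) l j := by rw [hB6, hA6]; exact hc l j
      have hb1 : 0 ≤ ((B ^ 6) ^ m) i l := pow_nonneg' hB60 m i l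
      have hb2 : 0 ≤ (B ^ 6) l j := hB60 l j
      calc c ^ m * c * (((B ^ 6) ^ m) i l * (B ^ 6) l j)
          = (c ^ m * ((B ^ 6) ^ m) i l) * (c * (B ^ 6) l j) := by ring
        _ ≤ ((A ^ 6) ^ m) i l * ((A ^ 6) l j) :=
            mul_le_mul h1 h2 (mul_nonneg hc0 hb2) (le_trans (mul_nonneg (pow_nonneg hc0 m) hb1) h1)
  -- Norm comparison along the subsequence 6*m
  have hγ1 : (1:ℝ≥0) < ‖c‖₊ := by
    have h : (1:ℝ) < ‖c‖ := by
      rw [Real.norm_eq_abs, abs_of_pos (lt_trans one_pos hc1)]; exact hc1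
    exact_mod_cast h
  have hnorm : ∀ m, (‖c‖₊ ^ m) * ‖cmap (B ^ (6*m))‖₊ ≤ ‖cmap (A ^ (6*m))‖₊ := by
    intro m
    have h1 : ‖cmap ((c ^ m) • (B ^ (6*m)))‖₊ ≤ ‖cmap (A ^ (6*m))‖₊ := by
      refine nnnorm_cmap_mono fun i j => ?_
      rw [Matrix.smul_apply, smul_eq_mul,
        abs_of_nonneg (mul_nonneg (pow_nonneg hc0 m) (pow_nonneg' hB0 _ i j))]
      rw [pow_mul, pow_mul]
      exact key m i j
    have h2 : cmap ((c ^ m) • (B ^ (6*m))) = ((c : ℂ) ^ m) • cmap (B ^ (6*m)) := by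
      ext i j
      simp [cmap, Matrix.map_apply, Matrix.smul_apply, smul_eq_mul]
    rw [h2, nnnorm_smul, nnnorm_pow, Complex.nnnorm_real] at h1
    exact h1
  obtain ⟨eB, tB⟩ := specRad_eq B
  obtain ⟨eA, tA⟩ := specRad_eq A
  rw [eB, eA]
  have h6 : Tendsto (fun m : ℕ => 6 * m) atTop atTop :=
    tendsto_atTop_mono (fun m => by simp only [id_eq]; omega) tendsto_id
  have h2' : Tendsto (fun m : ℕ => 2 * m) atTop atTop :=
    tendsto_atTop_mono (fun m => by simp only [id_eq]; omega) tendsto_id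
  have gelB6 := (gelfand B).comp h6
  have gelA6 := (gelfand A).comp h6
  have gelB2 := (gelfand B).comp h2'
  have i0 : Fin n := ⟨0, Nat.pos_of_ne_zero (NeZero.ne n)⟩
  have hβpos : 0 < (B ^ 2) i0 i0 := by rw [pow_two]; exact hPpos i0 i0
  have hB20 : ∀ i j, 0 ≤ (B ^ 2) i j := pow_nonneg' hB0 2
  have hent : ∀ m, ((B ^ 2) i0 i0) ^ m ≤ ((B ^ 2) ^ m) i0 i0 := by
    intro m
    induction m with
    | zero => simp
    | succ m ih =>
      rw [pow_succ ((B ^ 2) i0 i0) m, pow_succ (B ^ 2) m, Matrix.mul_apply]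
      have hB2m0 : ∀ i j, 0 ≤ ((B ^ 2) ^ m) i j := pow_nonneg' hB20 m
      calc ((B ^ 2) i0 i0) ^ m * ((B ^ 2) i0 i0)
          ≤ ((B ^ 2) ^ m) i0 i0 * ((B ^ 2) i0 i0) :=
            mul_le_mul_of_nonneg_right ih hβpos.le
        _ ≤ ∑ l, ((B ^ 2) ^ m) i0 l * (B ^ 2) l i0 :=
            Finset.single_le_sum (f := fun l => ((B ^ 2) ^ m) i0 l * (B ^ 2) l i0)
              (fun l _ => mul_nonneg (hB2m0 _ _) (hB20 _ _)) (Finset.mem_univ i0)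
  have hnormB : ∀ m, (‖(B ^ 2) i0 i0‖₊ ^ m : ℝ≥0) ≤ ‖cmap (B ^ (2*m))‖₊ := by
    intro m
    have h1 : ‖(B ^ (2*m)) i0 i0‖₊ ≤ ‖cmap (B ^ (2*m))‖₊ := by
      have h := entry_le_nnnorm (cmap (B ^ (2*m))) i0 i0
      rwa [show (cmap (B ^ (2*m))) i0 i0 = (((B ^ (2*m)) i0 i0 : ℝ) : ℂ) from rfl,
        Complex.nnnorm_real] at h
    refine le_trans ?_ h1
    have h2 : ((B ^ 2) i0 i0) ^ m ≤ (B ^ (2*m)) i0 i0 := by rw [pow_mul]; exact hent m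
    have h3 : 0 ≤ (B ^ (2*m)) i0 i0 := pow_nonneg' hB0 _ i0 i0
    rw [← NNReal.coe_le_coe, NNReal.coe_pow, coe_nnnorm, coe_nnnorm, Real.norm_eq_abs,
      Real.norm_eq_abs, abs_of_nonneg hβpos.le, abs_of_nonneg h3]
    exact h2
  have hρB : ((‖(B ^ 2) i0 i0‖₊ : ℝ≥0∞) ^ (1/2:ℝ)) ≤ spectralRadius ℂ (cmap B) := by
    refine le_of_tendsto_of_tendsto tendsto_const_nhds gelB2 ?_
    filter_upwards [eventually_ge_atTop 1] with m hm
    simp only [Function.comp_apply]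
    have h1 : ((‖(B ^ 2) i0 i0‖₊ : ℝ≥0∞) ^ m) ^ (1/((2*m : ℕ) : ℝ)) ≤
        (‖cmap (B ^ (2*m))‖₊ : ℝ≥0∞) ^ (1/((2*m : ℕ) : ℝ)) := by
      refine ENNReal.rpow_le_rpow ?_ (by positivity)
      rw [← ENNReal.coe_pow]
      exact ENNReal.coe_le_coe.2 (hnormB m)
    have h2 : ((‖(B ^ 2) i0 i0‖₊ : ℝ≥0∞) ^ m) ^ (1/((2*m : ℕ) : ℝ)) =
        (‖(B ^ 2) i0 i0‖₊ : ℝ≥0∞) ^ (1/2 : ℝ) := by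
      rw [← ENNReal.rpow_natCast _ m, ← ENNReal.rpow_mul]
      congr 1
      have hm' : (m:ℝ) ≠ 0 := Nat.cast_ne_zero.2 (by omega)
      push_cast
      field_simp
    rw [h2] at h1
    exact h1
  have hle : ((‖c‖₊ : ℝ≥0∞) ^ (1/6:ℝ)) * spectralRadius ℂ (cmap B) ≤
      spectralRadius ℂ (cmap A) := by
    refine le_of_tendsto_of_tendsto
      (ENNReal.Tendsto.const_mul gelB6
        (Or.inr (ENNReal.rpow_ne_top_of_nonneg (by norm_num) ENNReal.coe_ne_top)))
      gelA6 ?_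
    filter_upwards [eventually_ge_atTop 1] with m hm
    simp only [Function.comp_apply]
    have h1 : ((‖c‖₊ ^ m * ‖cmap (B ^ (6*m))‖₊ : ℝ≥0) : ℝ≥0∞) ^ (1/((6*m : ℕ) : ℝ)) ≤
        (‖cmap (A ^ (6*m))‖₊ : ℝ≥0∞) ^ (1/((6*m : ℕ) : ℝ)) :=
      ENNReal.rpow_le_rpow (ENNReal.coe_le_coe.2 (hnorm m)) (by positivity)
    rw [ENNReal.coe_mul, ENNReal.mul_rpow_of_nonneg _ _ (by positivity), ENNReal.coe_pow,
      ← ENNReal.rpow_natCast ((‖c‖₊ : ℝ≥0∞)) m, ← ENNReal.rpow_mul] at h1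
    have h2 : (m : ℝ) * (1/((6*m : ℕ) : ℝ)) = 1/6 := by
      have hm' : (m:ℝ) ≠ 0 := Nat.cast_ne_zero.2 (by omega)
      push_cast
      field_simp
    rw [h2] at h1
    exact h1
  have hρBpos : 0 < spectralRadius ℂ (cmap B) := by
    refine lt_of_lt_of_le ?_ hρB
    refine ENNReal.rpow_pos ?_ ENNReal.coe_ne_top
    exact ENNReal.coe_pos.2 (by simpa using hβpos.ne')
  have hγ6 : (1:ℝ≥0∞) < (‖c‖₊ : ℝ≥0∞) ^ (1/6:ℝ) := by
    have h := ENNReal.rpow_lt_rpow (x := 1) (y := (‖c‖₊:ℝ≥0∞))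
      (by exact_mod_cast hγ1) (by norm_num : (0:ℝ) < 1/6)
    simpa using h
  have hfin : spectralRadius ℂ (cmap B) < spectralRadius ℂ (cmap A) := by
    calc spectralRadius ℂ (cmap B) = 1 * spectralRadius ℂ (cmap B) := (one_mul _).symm
      _ < (‖c‖₊ : ℝ≥0∞) ^ (1/6:ℝ) * spectralRadius ℂ (cmap B) :=
          ENNReal.mul_lt_mul_left (ne_of_gt hρBpos) tB hγ6
      _ ≤ _ := hle
  exact (ENNReal.toReal_lt_toReal tB tA).2 hfin

lemma specRad_submatrix (M : Matrix (Fin n) (Fin n) ℝ) (e : Fin n ≃ Fin n) :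
    specRad (M.submatrix ⇑e ⇑e) = specRad M := by
  have key : spectrum ℂ ((M.submatrix ⇑e ⇑e).map (fun x => (x:ℂ))) =
      spectrum ℂ (M.map (fun x => (x:ℂ))) := by
    have h2 := AlgEquiv.spectrum_eq (Matrix.reindexAlgEquiv ℂ ℂ e.symm)
      (M.map (fun x => (x:ℂ)))
    rw [Matrix.reindexAlgEquiv_apply] at h2
    have h1 : (M.submatrix ⇑e ⇑e).map (fun x => (x:ℂ)) =
        ((M.map (fun x => (x:ℂ))).submatrix ⇑e ⇑e) := rfl
    rw [h1]
    simpa [Matrix.reindex_apply] using h2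
  unfold specRad
  rw [key]

end SRAux

lemma exists_perm {n k : ℕ} (hk : k < n) (N : Finset (Fin n)) (w : Fin n) (hwN : w ∉ N)
    (hcard : N.card = k) :
    ∃ σ : Equiv.Perm (Fin n), (σ w : ℕ) = k ∧ ∀ a ∈ N, (σ a : ℕ) < k := by
  classical
  set kv : Fin n := ⟨k, hk⟩ with hkv
  set K' : Finset (Fin n) := Finset.Iio kv with hK'
  have hK'mem : ∀ x : Fin n, x ∈ K' ↔ (x : ℕ) < k := by
    intro x
    simp [hK', hkv, Finset.mem_Iio, Fin.lt_def, -Fin.val_fin_lt]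
  have hK'card : K'.card = k := by rw [hK', Fin.card_Iio]
  have he1 : Fintype.card {x // x ∈ N} = Fintype.card {x // x ∈ K'} := by
    rw [Fintype.card_coe, Fintype.card_coe, hcard, hK'card]
  have he2 : Fintype.card {x // ¬ x ∈ N} = Fintype.card {x // ¬ x ∈ K'} := by
    rw [Fintype.card_subtype_compl, Fintype.card_subtype_compl,
      Fintype.card_coe, Fintype.card_coe, hcard, hK'card]
  let e1 : {x // x ∈ N} ≃ {x // x ∈ K'} := Fintype.equivOfCardEq he1
  let e2 : {x // ¬ x ∈ N} ≃ {x // ¬ x ∈ K'} := Fintype.equivOfCardEq he2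
  let σ1 : Equiv.Perm (Fin n) :=
    (Equiv.sumCompl (· ∈ N)).symm.trans ((e1.sumCongr e2).trans (Equiv.sumCompl (· ∈ K')))
  have hmem : ∀ a, a ∈ N → σ1 a ∈ K' := by
    intro a ha
    simp only [σ1, Equiv.trans_apply, Equiv.sumCompl_symm_apply_of_pos ha,
      Equiv.sumCongr_apply, Sum.map_inl, Equiv.sumCompl_apply_inl]
    exact (e1 ⟨a, ha⟩).2
  have hnot : ∀ a, a ∉ N → σ1 a ∉ K' := by
    intro a ha
    simp only [σ1, Equiv.trans_apply, Equiv.sumCompl_symm_apply_of_neg ha,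
      Equiv.sumCongr_apply, Sum.map_inr, Equiv.sumCompl_apply_inr]
    exact (e2 ⟨a, ha⟩).2
  refine ⟨σ1.trans (Equiv.swap (σ1 w) kv), ?_, ?_⟩
  · simp [Equiv.trans_apply, Equiv.swap_apply_left, hkv]
  · intro a ha
    have h1 : σ1 a ∈ K' := hmem a ha
    have h2 : σ1 a ≠ σ1 w := fun h => hwN (σ1.injective h ▸ ha)
    have h3 : σ1 a ≠ kv := by
      intro h
      have := (hK'mem _).1 h1
      rw [h] at this
      simp [hkv] at this
    simp only [Equiv.trans_apply, Equiv.swap_apply_of_ne_of_ne h2 h3]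
    exact (hK'mem _).1 h1


namespace GAux

open SRAux

variable {n : ℕ} {G H : Digraph (Fin n)}

lemma dwalk_zero (G : Digraph (Fin n)) (i : Fin n) : DWalk G i i 0 :=
  ⟨fun _ => i, rfl, rfl, fun l hl => absurd hl (Nat.not_lt_zero l)⟩

lemma dwalk_zero' {i j : Fin n} (h : DWalk G i j 0) : i = j := by
  obtain ⟨f, h0, hk, -⟩ := h
  rw [← h0, ← hk]

lemma dwalk_one {i j : Fin n} (h : G.Adj i j) : DWalk G i j 1 := by
  refine ⟨fun l => if l = 0 then i else j, by simp, by simp, ?_⟩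
  intro l hl
  have hl0 : l = 0 := by omega
  subst hl0
  simpa using h

lemma dwalk_one' {i j : Fin n} (h : DWalk G i j 1) : G.Adj i j := by
  obtain ⟨f, h0, hk, ha⟩ := h
  have h2 := ha 0 (by omega)
  simpa [h0, hk] using h2

lemma dwalk_map {i j : Fin n} (e : Fin n → Fin n)
    (harc : ∀ a b, G.Adj a b → H.Adj (e a) (e b)) {m : ℕ} (h : DWalk G i j m) :
    DWalk H (e i) (e j) m := by
  obtain ⟨f, h0, hk, ha⟩ := h
  exact ⟨e ∘ f, by simp [Function.comp, h0], by simp [Function.comp, hk],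
    fun l hl => harc _ _ (ha l hl)⟩

lemma ddist_le {i j : Fin n} {m : ℕ} (h : DWalk G i j m) : ddist G i j ≤ m := Nat.sInf_le h

lemma ddist_self (G : Digraph (Fin n)) (i : Fin n) : ddist G i i = 0 :=
  Nat.le_zero.mp (ddist_le (dwalk_zero G i))

lemma dwalk_ddist {i j : Fin n} (h : ∃ m, DWalk G i j m) : DWalk G i j (ddist G i j) :=
  Nat.sInf_mem h

lemma one_le_ddist {i j : Fin n} (hne : i ≠ j) (h : ∃ m, DWalk G i j m) :
    1 ≤ ddist G i j := by
  by_contra hlt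
  push_neg at hlt
  have h0 : ddist G i j = 0 := by omega
  exact hne (dwalk_zero' (h0 ▸ dwalk_ddist h))

lemma ddist_eq_one_iff {i j : Fin n} (hne : i ≠ j) (h : ∃ m, DWalk G i j m) :
    ddist G i j = 1 ↔ G.Adj i j := by
  constructor
  · intro h1
    exact dwalk_one' (h1 ▸ dwalk_ddist h)
  · intro ha
    have h2 := ddist_le (dwalk_one ha)
    have h3 := one_le_ddist hne h
    omega

lemma ddist_mono (e : Fin n → Fin n) (harc : ∀ a b, G.Adj a b → H.Adj (e a) (e b))
    (i j : Fin n) (h : ∃ m, DWalk G i j m) : ddist H (e i) (e j) ≤ ddist G i j :=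
  ddist_le (dwalk_map e harc (dwalk_ddist h))

lemma KD_loopless {k : ℕ} : Loopless (KD n k 1) := fun _ h => h.1 rfl

lemma KD_sconn {k : ℕ} (hk : 1 ≤ k) (hkn : k + 2 ≤ n) : SConn (KD n k 1) := by
  intro i j
  rcases eq_or_ne i j with rfl | hne
  · exact ⟨0, dwalk_zero _ _⟩
  by_cases hadj : (KD n k 1).Adj i j
  · exact ⟨1, dwalk_one hadj⟩
  · have hadj' : ¬(i ≠ j ∧ ¬(k + 1 ≤ (i : ℕ) ∧ k ≤ (j : ℕ) ∧ (j : ℕ) < k + 1)) := hadj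
    push_neg at hadj'
    obtain ⟨hi, hj1, hj2⟩ := hadj' hne
    have hz : (0 : ℕ) < n := by omega
    refine ⟨2, fun l => if l = 0 then i else if l = 1 then (⟨0, hz⟩ : Fin n) else j,
      rfl, rfl, ?_⟩
    intro l hl
    interval_cases l
    · show (KD n k 1).Adj i ⟨0, hz⟩
      refine ⟨?_, ?_⟩
      · intro h
        have := congrArg (fun x : Fin n => (x : ℕ)) h
        simp at this
        omega
      · rintro ⟨-, h2, -⟩
        simp at h2
        omega
    · show (KD n k 1).Adj ⟨0, hz⟩ j
      refine ⟨?_, ?_⟩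
      · intro h
        have := congrArg (fun x : Fin n => (x : ℕ)) h
        simp at this
        omega
      · rintro ⟨h1, -, -⟩
        simp at h1

lemma transm_nonneg (G : Digraph (Fin n)) (i : Fin n) : 0 ≤ transm G i :=
  Finset.sum_nonneg fun _ _ => Nat.cast_nonneg _

lemma Dalpha_diag (α : ℝ) (G : Digraph (Fin n)) (i : Fin n) :
    Dalpha α G i i = α * transm G i := by
  simp [Dalpha, Matrix.add_apply, Matrix.smul_apply, Matrix.diagonal_apply_eq,
    ddist_self, smul_eq_mul]

lemma Dalpha_off (α : ℝ) (G : Digraph (Fin n)) {i j : Fin n} (h : i ≠ j) :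
    Dalpha α G i j = (1 - α) * (ddist G i j : ℝ) := by
  simp [Dalpha, Matrix.add_apply, Matrix.smul_apply, Matrix.diagonal_apply_ne _ h, smul_eq_mul]

lemma Dalpha_nonneg {α : ℝ} (h0 : 0 ≤ α) (h1 : α < 1) (G : Digraph (Fin n)) (i j : Fin n) :
    0 ≤ Dalpha α G i j := by
  rcases eq_or_ne i j with rfl | hne
  · rw [Dalpha_diag]
    exact mul_nonneg h0 (transm_nonneg G i)
  · rw [Dalpha_off _ _ hne]
    exact mul_nonneg (by linarith) (Nat.cast_nonneg _)

lemma Dalpha_off_pos {α : ℝ} (h1 : α < 1) (hsc : SConn G) {i j : Fin n} (h : i ≠ j) :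
    0 < Dalpha α G i j := by
  rw [Dalpha_off _ _ h]
  refine mul_pos (by linarith) ?_
  have := one_le_ddist h (hsc i j)
  exact_mod_cast Nat.lt_of_lt_of_le Nat.zero_lt_one this

end GAux


open SRAux GAux in
theorem stmt18 {n k : ℕ} (hk : 1 ≤ k) (hkn : k + 2 ≤ n) (G : Digraph (Fin n))
    (hG : Loopless G) (hsc : SConn G)
    (hcut : ∃ F : Finset (Fin n × Fin n), F.card = k ∧
      ¬ SConn (Digraph.mk (fun i j => G.Adj i j ∧ (i, j) ∉ F)))
    (hmin : ∀ F : Finset (Fin n × Fin n), F.card < k →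
      SConn (Digraph.mk (fun i j => G.Adj i j ∧ (i, j) ∉ F)))
    (hw : ∃ w : Fin n, Set.ncard {u : Fin n | G.Adj u w} = k)
    (α : ℝ) (h0 : 0 ≤ α) (h1 : α < 1) :
    mualpha α (KD n k 1) ≤ mualpha α G ∧
    (mualpha α G = mualpha α (KD n k 1) ↔ IsoD G (KD n k 1)) := by
  classical
  clear hcut hmin
  obtain ⟨w, hwcard⟩ := hw
  have hn3 : 3 ≤ n := by omega
  haveI : NeZero n := ⟨by omega⟩
  have hfin : ({u : Fin n | G.Adj u w}).Finite := Set.toFinite _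
  set N : Finset (Fin n) := hfin.toFinset with hNdef
  have hNcard : N.card = k := by
    rw [hNdef, ← Set.ncard_eq_toFinset_card _ hfin]
    exact hwcard
  have hwN : w ∉ N := fun h => hG w (by simpa [hNdef, Set.Finite.mem_toFinset] using h)
  obtain ⟨σ, hσw, hσN⟩ := exists_perm (show k < n by omega) N w hwN hNcard
  have hKsc : SConn (KD n k 1) := KD_sconn hk hkn
  have harc : ∀ a b, G.Adj a b → (KD n k 1).Adj (σ a) (σ b) := by
    intro a b hab
    have hne : a ≠ b := fun h => hG a (h ▸ hab)
    refine ⟨fun h => hne (σ.injective h), ?_⟩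
    rintro ⟨hh1, hh2, hh3⟩
    have hbk : (σ b : ℕ) = k := by omega
    have hbw : b = w := by
      have : σ b = σ w := Fin.ext (by rw [hσw]; exact hbk)
      exact σ.injective this
    subst hbw
    have haN : a ∈ N := by simpa [hNdef, Set.Finite.mem_toFinset] using hab
    have := hσN a haN
    omega
  set A : Matrix (Fin n) (Fin n) ℝ := (Dalpha α G).submatrix ⇑σ.symm ⇑σ.symm with hAdef
  set B : Matrix (Fin n) (Fin n) ℝ := Dalpha α (KD n k 1) with hBdef
  have hdd : ∀ a b : Fin n, ddist (KD n k 1) (σ a) (σ b) ≤ ddist G a b :=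
    fun a b => ddist_mono σ harc a b (hsc a b)
  have htr : ∀ a, transm (KD n k 1) (σ a) ≤ transm G a := by
    intro a
    unfold transm
    rw [← Equiv.sum_comp σ (fun j => ((ddist (KD n k 1) (σ a) j : ℝ)))]
    exact Finset.sum_le_sum fun b _ => by exact_mod_cast hdd a b
  have hBA : ∀ i j, B i j ≤ A i j := by
    intro i j
    have hAij : A i j = Dalpha α G (σ.symm i) (σ.symm j) := rfl
    rcases eq_or_ne i j with rfl | hne
    · rw [hAij, hBdef, Dalpha_diag, Dalpha_diag]
      refine mul_le_mul_of_nonneg_left ?_ h0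
      have h2 := htr (σ.symm i)
      rwa [Equiv.apply_symm_apply] at h2
    · have hne' : σ.symm i ≠ σ.symm j := fun h => hne (by simpa using congrArg σ h)
      rw [hAij, hBdef, Dalpha_off _ _ hne, Dalpha_off _ _ hne']
      refine mul_le_mul_of_nonneg_left ?_ (by linarith)
      have h2 := hdd (σ.symm i) (σ.symm j)
      rw [Equiv.apply_symm_apply, Equiv.apply_symm_apply] at h2
      exact_mod_cast h2
  have hB0 : ∀ i j, 0 ≤ B i j := fun i j => Dalpha_nonneg h0 h1 _ i j
  have hBpos : ∀ i j, i ≠ j → 0 < B i j := fun i j hne => Dalpha_off_pos h1 hKsc hne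
  have hspecA : specRad A = mualpha α G := specRad_submatrix (Dalpha α G) σ.symm
  have hmuB : mualpha α (KD n k 1) = specRad B := rfl
  constructor
  · rw [hmuB, ← hspecA]
    exact specRad_mono hB0 hBA
  constructor
  · -- equality implies isomorphic
    intro heq
    have hspec_eq : specRad B = specRad A := by
      rw [hspecA, ← hmuB]
      exact heq.symm
    have hBA_eq : B = A := by
      by_contra hneq
      have hexoff : ∃ a b, a ≠ b ∧ B a b < A a b := by
        by_contra hcon
        push_neg at hcon
        have hoff : ∀ a b : Fin n, a ≠ b → B a b = A a b :=
          fun a b h => le_antisymm (hBA a b) (hcon a b h)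
        have hd : ∀ a b : Fin n, (ddist (KD n k 1) a b : ℝ) =
            (ddist G (σ.symm a) (σ.symm b) : ℝ) := by
          intro a b
          rcases eq_or_ne a b with rfl | h
          · rw [ddist_self, ddist_self]
          · have h2 := hoff a b h
            have h3 : σ.symm a ≠ σ.symm b := fun hh => h (by simpa using congrArg σ hh)
            rw [hBdef, Dalpha_off _ _ h] at h2
            have h4 : A a b = (1 - α) * (ddist G (σ.symm a) (σ.symm b) : ℝ) :=
              Dalpha_off _ _ h3
            rw [h4] at h2
            have h5 : (1 : ℝ) - α ≠ 0 := by linarith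
            exact mul_left_cancel₀ h5 h2
        apply hneq
        ext i j
        rcases eq_or_ne i j with rfl | h
        · show B i i = A i i
          have hAii : A i i = Dalpha α G (σ.symm i) (σ.symm i) := rfl
          rw [hBdef, hAii, Dalpha_diag, Dalpha_diag]
          congr 1
          unfold transm
          rw [← Equiv.sum_comp σ.symm
            (fun j => ((ddist G (σ.symm i) j : ℝ)))]
          exact Finset.sum_congr rfl fun b _ => hd i b
        · exact hoff i j h
      have hlt := specRad_lt hn3 hB0 hBpos hBA hexoff
      rw [hspec_eq] at hlt
      exact lt_irrefl _ hlt
    refine ⟨σ, fun a b => ?_⟩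
    rcases eq_or_ne a b with rfl | hne
    · exact ⟨fun h => absurd h (hG a), fun h => absurd h (KD_loopless _)⟩
    · have hσne : σ a ≠ σ b := fun h => hne (σ.injective h)
      have hBab : B (σ a) (σ b) = A (σ a) (σ b) := by rw [hBA_eq]
      have hdeq : ddist (KD n k 1) (σ a) (σ b) = ddist G a b := by
        have hh1 : B (σ a) (σ b) = (1 - α) * (ddist (KD n k 1) (σ a) (σ b) : ℝ) := by
          rw [hBdef]; exact Dalpha_off _ _ hσne
        have hh2 : A (σ a) (σ b) = (1 - α) * (ddist G a b : ℝ) := by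
          have : A (σ a) (σ b) = Dalpha α G (σ.symm (σ a)) (σ.symm (σ b)) := rfl
          rw [this, Equiv.symm_apply_apply, Equiv.symm_apply_apply]
          exact Dalpha_off _ _ hne
        have h5 : (1 : ℝ) - α ≠ 0 := by linarith
        have h6 := hBab
        rw [hh1, hh2] at h6
        exact_mod_cast mul_left_cancel₀ h5 h6
      rw [← ddist_eq_one_iff hne (hsc a b), ← ddist_eq_one_iff hσne (hKsc _ _), hdeq]
  · -- isomorphic implies equality
    rintro ⟨e, he⟩
    have harc2 : ∀ a b, G.Adj a b → (KD n k 1).Adj (e a) (e b) := fun a b h => (he a b).1 h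
    have harc3 : ∀ a b, (KD n k 1).Adj a b → G.Adj (e.symm a) (e.symm b) := by
      intro a b h
      have h2 := (he (e.symm a) (e.symm b)).2
      simp only [Equiv.apply_symm_apply] at h2
      exact h2 h
    have hd : ∀ a b, ddist G a b = ddist (KD n k 1) (e a) (e b) := by
      intro a b
      refine le_antisymm ?_ (ddist_mono e harc2 a b (hsc a b))
      have h2 := ddist_mono e.symm harc3 (e a) (e b) (hKsc _ _)
      simpa using h2
    have hM : Dalpha α G = (Dalpha α (KD n k 1)).submatrix ⇑e ⇑e := by
      ext i j
      rcases eq_or_ne i j with rfl | hne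
      · rw [Matrix.submatrix_apply, Dalpha_diag, Dalpha_diag]
        congr 1
        unfold transm
        rw [← Equiv.sum_comp e (fun j => ((ddist (KD n k 1) (e i) j : ℝ)))]
        exact Finset.sum_congr rfl fun b _ => by rw [hd]
      · rw [Matrix.submatrix_apply, Dalpha_off _ _ hne,
          Dalpha_off _ _ (fun h => hne (e.injective h)), hd]
    show specRad (Dalpha α G) = specRad (Dalpha α (KD n k 1))
    rw [hM]
    exact specRad_submatrix _ e
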